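/- The five points M, C̄, P₁, P₂, P₃ are concyclic: each of them satisfies K(x,y) = x² + y² − (c² cos u/(2a))·x + (c² sin u/(2b))·y − (a² + b²)/2 = 0. Moreover the center of this circle is the midpoint (M + C̄)/2, so the segment from M to C̄ is a diameter of the circle. -/

import Mathlib

open Real

noncomputable def ellipsePt (a b t : ℝ) : ℝ × ℝ := (a * cos t, b * sin t)

/-- The circle `K` through the cusp pre-images. -/
noncomputable def circleK (a b u : ℝ) (p : ℝ × ℝ) : ℝ :=
  p.1 ^ 2 + p.2 ^ 2 - ((a ^ 2 - b ^ 2) * cos u / (2 * a)) * p.1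
    + ((a ^ 2 - b ^ 2) * sin u / (2 * b)) * p.2 - (a ^ 2 + b ^ 2) / 2

lemma circleK_ellipse (a b u t : ℝ) (ha : a ≠ 0) (hb : b ≠ 0) :
    circleK a b u (ellipsePt a b t)
      = (a ^ 2 - b ^ 2) / 2 * (Real.cos (2 * t) - Real.cos (t + u)) := by
  simp only [circleK, ellipsePt]
  rw [Real.cos_two_mul, Real.cos_add]
  simp only [mul_pow]
  rw [Real.sin_sq]
  field_simp
  ring

/-- the five points `M, C̄, P₁, P₂, P₃` are concyclic (they lie on the circle
`K = 0`), whose center is the midpoint of `M` and `C̄`, so `M C̄` is a diameter. -/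
theorem stmt5 (a b u : ℝ) (hb : 0 < b) (hab : b < a)
    (M C P₁ P₂ P₃ : ℝ × ℝ)
    (hM : M = ellipsePt a b u)
    (hC : C = (-((a ^ 2 + b ^ 2) * cos u) / (2 * a), -((a ^ 2 + b ^ 2) * sin u) / (2 * b)))
    (hP₁ : P₁ = ellipsePt a b (-u / 3))
    (hP₂ : P₂ = ellipsePt a b (-u / 3 - 2 * π / 3))
    (hP₃ : P₃ = ellipsePt a b (-u / 3 - 4 * π / 3)) :
    circleK a b u M = 0 ∧ circleK a b u C = 0 ∧
    circleK a b u P₁ = 0 ∧ circleK a b u P₂ = 0 ∧ circleK a b u P₃ = 0 ∧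
    -- the center of the circle `x² + y² + Dx + Ey + F = 0`, namely `(−D/2, −E/2)`,
    -- is the midpoint of `M` and `C̄`:
    (((a ^ 2 - b ^ 2) * cos u / (4 * a), -((a ^ 2 - b ^ 2) * sin u / (4 * b)))
        = ((M.1 + C.1) / 2, (M.2 + C.2) / 2)) := by
  have ha0 : a ≠ 0 := (hb.trans hab).ne'
  have hb0 : b ≠ 0 := hb.ne'
  subst hM hC hP₁ hP₂ hP₃
  refine ⟨?_, ?_, ?_, ?_, ?_, ?_⟩
  · rw [circleK_ellipse a b u u ha0 hb0]
    have : u + u = 2 * u := by ring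
    rw [this]; ring
  · simp only [circleK]
    field_simp
    linear_combination (2*a^2*b^2*(a^2+b^2)) * Real.sin_sq_add_cos_sq u
  · rw [circleK_ellipse a b u _ ha0 hb0]
    have : (2 : ℝ) * (-u / 3) = -(-u / 3 + u) := by ring
    rw [this, Real.cos_neg]; ring
  · rw [circleK_ellipse a b u _ ha0 hb0]
    have : (2 : ℝ) * (-u / 3 - 2 * π / 3) = -((-u / 3 - 2 * π / 3 + u) + 2 * π) := by ring
    rw [this, Real.cos_neg, Real.cos_add_two_pi]; ring
  · rw [circleK_ellipse a b u _ ha0 hb0]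
    have : (2 : ℝ) * (-u / 3 - 4 * π / 3)
        = -(((-u / 3 - 4 * π / 3 + u) + 2 * π) + 2 * π) := by ring
    rw [this, Real.cos_neg, Real.cos_add_two_pi, Real.cos_add_two_pi]; ring
  · simp only [ellipsePt]
    rw [Prod.mk.injEq]
    constructor
    · field_simp; ring
    · field_simp; ring
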